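/- Let Φ be a real number with Φ² = Φ + 1 and let w = (w₁, …, wₙ) be a nonempty word of integers. Then the (1,1) entry (row 1, column 1) of M(Φ, w) equals A·Φ + B, where A = Σ_{s ≪₁ w} χ(n − |s|) · F_{|s|} · m_s and B = Σ_{s ≪₁ w} χ(n − |s|) · F_{|s|−1} · m_s, the sums ranging over all subwords s of w with s ≪₁ w. -/

import Mathlib

open Matrix

noncomputable section

/-- The matrix `S = !![0, -1; 1, 0]` over `ℝ`. -/
def S : Matrix (Fin 2) (Fin 2) ℝ := !![0, -1; 1, 0]

/-- The matrix `T(λ) = !![1, λ; 0, 1]` over `ℝ`. -/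
def T (lam : ℝ) : Matrix (Fin 2) (Fin 2) ℝ := !![1, lam; 0, 1]

/-- For a nonempty word `w = (w₁, …, wₙ)` of integers,
`M lam w = T(λ)^{w₁} · S · T(λ)^{w₂} · S · ⋯ · S · T(λ)^{wₙ}`. -/
def M (lam : ℝ) : List ℤ → Matrix (Fin 2) (Fin 2) ℝ
  | [] => 1
  | a :: t => T lam ^ a * (t.map fun b => S * T lam ^ b).prod

/-- The 4-periodic function with `χ(0) = 0, χ(1) = 1, χ(2) = 0, χ(3) = -1`
(the nontrivial Dirichlet character mod 4, extended to all integers). -/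
def chi (m : ℤ) : ℤ := if m % 4 = 1 then 1 else if m % 4 = 3 then -1 else 0

/-- The Fibonacci numbers, extended so that `F₋₁ = 1` (the only negative index used). -/
def fibz (m : ℤ) : ℤ := if m < 0 then 1 else (Nat.fib m.toNat : ℤ)

/-- A subword of `(w₁, …, wₙ)` is encoded by its set `J` of (0-based) positions;
the 1-based indices `j₁ < ⋯ < j_m` are the sorted elements of `J` plus one.
`ll1 J` says `jᵢ ≡ i (mod 2)` for all `i`, i.e. `s ≪₁ w`; the 0-based version is
that the `i`-th smallest element of `J` is congruent to `i` mod 2 (0-based). -/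
def ll1 {n : ℕ} (J : Finset (Fin n)) : Prop :=
  ∀ i : ℕ, ∀ hi : i < (J.sort (· ≤ ·)).length,
    ((J.sort (· ≤ ·)).get ⟨i, hi⟩).val % 2 = i % 2

instance {n : ℕ} : DecidablePred (ll1 (n := n)) := fun _ =>
  Nat.decidableBallLT _ _

section helper
open Finset


lemma chi_add_two (k : ℤ) : chi (k + 2) = - chi k := by
  unfold chi; split_ifs <;> omega

lemma fibz_succ (c : ℕ) : fibz ((c : ℤ) + 1) = fibz c + fibz ((c : ℤ) - 1) := by
  unfold fibz
  rcases c with _ | c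
  · norm_num
  · push_cast
    have h0 : ¬ ((c : ℤ) + 1 + 1 < 0) := by omega
    have h1 : ¬ ((c : ℤ) + 1 < 0) := by omega
    have h2 : ¬ ((c : ℤ) + 1 - 1 < 0) := by omega
    rw [if_neg h0, if_neg h1, if_neg h2]
    have e0 : ((c : ℤ) + 1 + 1).toNat = c + 2 := by omega
    have e1 : ((c : ℤ) + 1).toNat = c + 1 := by omega
    have e2 : ((c : ℤ) + 1 - 1).toNat = c := by omega
    rw [e0, e1, e2]
    push_cast [Nat.fib_add_two]
    ring

lemma Tmul (x y : ℝ) : !![1, x; 0, 1] * !![1, y; 0, (1:ℝ)] = !![1, x + y; 0, 1] := by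
  rw [Matrix.mul_fin_two]; ring_nf

lemma Tone : !![1, 0; 0, (1:ℝ)] = 1 := by
  rw [Matrix.one_fin_two]

lemma Tinv (x : ℝ) : (!![1, x; 0, (1:ℝ)])⁻¹ = !![1, -x; 0, 1] := by
  apply Matrix.inv_eq_right_inv
  rw [Tmul]; rw [← Tone]; norm_num

lemma Tdet (x : ℝ) : IsUnit (!![1, x; 0, (1:ℝ)]).det := by
  simp [Matrix.det_fin_two]

lemma Tpow (lam : ℝ) (a : ℤ) : T lam ^ a = !![1, a * lam; 0, 1] := by
  unfold T
  induction a using Int.induction_on with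
  | zero => rw [zpow_zero, ← Tone]; norm_num
  | succ n ih =>
    rw [Matrix.zpow_add_one (Tdet lam), ih, Tmul]
    push_cast; ring_nf
  | pred n ih =>
    rw [show (-(n:ℤ) - 1) = (-(n:ℤ)) + (-1) by ring, Matrix.zpow_add (Tdet lam),
      Matrix.zpow_neg_one, ih, Tinv, Tmul]
    push_cast; ring_nf


def ee : List ℤ → ℤ → (ℤ × ℤ) × (ℤ × ℤ)
  | [], k => ((0, chi k), (0, chi k))
  | a :: t, k =>
      ((a * ((ee t k).1.1 + (ee t k).1.2) + (ee t (k+1)).2.1,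
        a * (ee t k).1.1 + (ee t (k+1)).2.2),
       ((ee t (k+1)).1.1, (ee t (k+1)).1.2))

lemma ee_add_two (w : List ℤ) (k : ℤ) : ee w (k + 2) = - ee w k := by
  induction w generalizing k with
  | nil => simp [ee, chi_add_two, Prod.ext_iff]
  | cons a t ih =>
    have h1 : k + 2 + 1 = (k + 1) + 2 := by ring
    simp only [ee, h1, ih, Prod.fst_neg, Prod.snd_neg, Prod.ext_iff]
    refine ⟨⟨by ring, by ring⟩, by simp, by simp⟩

def e1 (Φ : ℝ) (k : ℤ) (w : List ℤ) : ℝ := ((ee w k).1.1 : ℝ) * Φ + ((ee w k).1.2 : ℝ)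
def e3 (Φ : ℝ) (k : ℤ) (w : List ℤ) : ℝ := ((ee w k).2.1 : ℝ) * Φ + ((ee w k).2.2 : ℝ)

lemma e1_add_two (Φ : ℝ) (w : List ℤ) (k : ℤ) : e1 Φ (k + 2) w = - e1 Φ k w := by
  simp [e1, ee_add_two]; ring
lemma e3_add_two (Φ : ℝ) (w : List ℤ) (k : ℤ) : e3 Φ (k + 2) w = - e3 Φ k w := by
  simp [e3, ee_add_two]; ring
lemma e3_cons (Φ : ℝ) (a : ℤ) (t : List ℤ) (k : ℤ) : e3 Φ k (a :: t) = e1 Φ (k + 1) t := by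
  simp [e3, e1, ee]
lemma e1_cons (Φ : ℝ) (hΦ : Φ ^ 2 = Φ + 1) (a : ℤ) (t : List ℤ) (k : ℤ) :
    e1 Φ k (a :: t) = a * Φ * e1 Φ k t + e3 Φ (k + 1) t := by
  simp only [e1, e3, ee]
  push_cast
  linear_combination (-(a : ℝ) * ((ee t k).1.1 : ℝ)) * hΦ

lemma Nmat (Φ : ℝ) (hΦ : Φ ^ 2 = Φ + 1) (w : List ℤ) :
    (w.map fun b => S * T Φ ^ b).prod =
      !![e3 Φ 1 w, -(e3 Φ 0 w); e1 Φ 0 w, e1 Φ 1 w] := by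
  induction w with
  | nil =>
    simp [e1, e3, ee, chi, Matrix.one_fin_two]
  | cons a t ih =>
    rw [List.map_cons, List.prod_cons, ih, Tpow]
    have h13 : e3 Φ 1 (a :: t) = - e1 Φ 0 t := by
      rw [e3_cons, show (1:ℤ) + 1 = 0 + 2 by ring, e1_add_two]
    have h30 : e3 Φ 0 (a :: t) = e1 Φ 1 t := by rw [e3_cons]; norm_num
    have h10 : e1 Φ 0 (a :: t) = a * Φ * e1 Φ 0 t + e3 Φ 1 t := by
      rw [e1_cons Φ hΦ]; norm_num
    have h11 : e1 Φ 1 (a :: t) = a * Φ * e1 Φ 1 t - e3 Φ 0 t := by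
      rw [e1_cons Φ hΦ, show (1:ℤ) + 1 = 0 + 2 by ring, e3_add_two]; ring
    rw [h13, h30, h10, h11]
    unfold S
    rw [show (!![0,-1;1,0] * !![1, a*Φ; 0,1] : Matrix (Fin 2) (Fin 2) ℝ) = !![0,-1;1,a*Φ] by
      rw [Matrix.mul_fin_two]; ring_nf]
    rw [Matrix.mul_fin_two]
    congr 1 <;> ring

def ll3 {n : ℕ} (J : Finset (Fin n)) : Prop :=
  ∀ i : ℕ, ∀ hi : i < (J.sort (· ≤ ·)).length,
    ((J.sort (· ≤ ·)).get ⟨i, hi⟩).val % 2 = (i + 1) % 2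
instance {n : ℕ} : DecidablePred (ll3 (n := n)) := fun _ => Nat.decidableBallLT _ _


lemma sort_map_succ {n : ℕ} (J : Finset (Fin n)) :
    (J.map (Fin.succEmb n)).sort (· ≤ ·) = (J.sort (· ≤ ·)).map Fin.succ := by
  rw [← Finset.sort_val, ← Finset.sort_val, Finset.map_val, Fin.coe_succEmb]
  exact (Multiset.map_sort Fin.succ J.val _ _
    (fun a _ b _ => (Fin.succ_le_succ_iff).symm)).symm

lemma zero_not_mem_map {n : ℕ} (J : Finset (Fin n)) : (0 : Fin (n+1)) ∉ J.map (Fin.succEmb n) := by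
  simp only [Finset.mem_map, Fin.coe_succEmb]
  rintro ⟨x, -, hx⟩
  exact (Fin.succ_ne_zero x) hx

lemma sort_insert_zero {n : ℕ} (J : Finset (Fin n)) :
    (insert (0 : Fin (n+1)) (J.map (Fin.succEmb n))).sort (· ≤ ·)
      = 0 :: (J.sort (· ≤ ·)).map Fin.succ := by
  rw [Finset.sort_insert (· ≤ ·) (fun b _ => Fin.zero_le b) (zero_not_mem_map J), sort_map_succ]

lemma ll1_map {n : ℕ} (J : Finset (Fin n)) : ll1 (J.map (Fin.succEmb n)) ↔ ll3 J := by
  unfold ll1 ll3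
  rw [sort_map_succ]
  constructor
  · intro h i hi
    have hi' : i < ((J.sort (· ≤ ·)).map Fin.succ).length := by simpa using hi
    have := h i hi'
    simp only [List.get_eq_getElem, List.getElem_map, Fin.val_succ] at this ⊢
    omega
  · intro h i hi
    have hi' : i < (J.sort (· ≤ ·)).length := by simpa using hi
    have := h i hi'
    simp only [List.get_eq_getElem, List.getElem_map, Fin.val_succ] at this ⊢
    omega

lemma ll3_map {n : ℕ} (J : Finset (Fin n)) : ll3 (J.map (Fin.succEmb n)) ↔ ll1 J := by
  unfold ll1 ll3
  rw [sort_map_succ]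
  constructor
  · intro h i hi
    have hi' : i < ((J.sort (· ≤ ·)).map Fin.succ).length := by simpa using hi
    have := h i hi'
    simp only [List.get_eq_getElem, List.getElem_map, Fin.val_succ] at this ⊢
    omega
  · intro h i hi
    have hi' : i < (J.sort (· ≤ ·)).length := by simpa using hi
    have := h i hi'
    simp only [List.get_eq_getElem, List.getElem_map, Fin.val_succ] at this ⊢
    omega

lemma ll1_insert {n : ℕ} (J : Finset (Fin n)) :
    ll1 (insert (0 : Fin (n+1)) (J.map (Fin.succEmb n))) ↔ ll1 J := by
  unfold ll1
  rw [sort_insert_zero]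
  constructor
  · intro h i hi
    have hi' : i + 1 < (0 :: (J.sort (· ≤ ·)).map Fin.succ).length := by
      simpa using hi
    have := h (i+1) hi'
    simp only [List.get_eq_getElem, List.getElem_cons_succ, List.getElem_map,
      Fin.val_succ] at this ⊢
    omega
  · intro h i hi
    match i with
    | 0 => simp
    | (i+1) =>
      have hi' : i < (J.sort (· ≤ ·)).length := by
        rw [Finset.length_sort]; simp at hi; omega
      have := h i hi'
      simp only [List.get_eq_getElem, List.getElem_cons_succ, List.getElem_map,
        Fin.val_succ] at this ⊢
      omega

lemma ll3_insert {n : ℕ} (J : Finset (Fin n)) :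
    ¬ ll3 (insert (0 : Fin (n+1)) (J.map (Fin.succEmb n))) := by
  unfold ll3
  rw [sort_insert_zero]
  intro h
  have h0 : (0:ℕ) < (0 :: (J.sort (· ≤ ·)).map Fin.succ).length := by simp
  have := h 0 h0
  simp at this

lemma preimage_map {n : ℕ} (J : Finset (Fin n)) :
    (J.map (Fin.succEmb n)).preimage Fin.succ (Set.injOn_of_injective (Fin.succ_injective n)) = J := by
  ext x
  simp [Finset.mem_preimage, Fin.coe_succEmb, (Fin.succ_injective n).eq_iff]

lemma map_preimage {n : ℕ} (K : Finset (Fin (n+1))) (h0 : (0 : Fin (n+1)) ∉ K) :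
    (K.preimage Fin.succ (Set.injOn_of_injective (Fin.succ_injective n))).map (Fin.succEmb n) = K := by
  ext x
  simp only [Finset.mem_map, Finset.mem_preimage, Fin.coe_succEmb]
  constructor
  · rintro ⟨y, hy, rfl⟩; exact hy
  · intro hx
    cases x using Fin.cases with
    | zero => exact absurd hx h0
    | succ y => exact ⟨y, hx, rfl⟩

lemma insert_map_preimage {n : ℕ} (K : Finset (Fin (n+1))) (h0 : (0 : Fin (n+1)) ∈ K) :
    insert 0 ((K.preimage Fin.succ
      (Set.injOn_of_injective (Fin.succ_injective n))).map (Fin.succEmb n)) = K := by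
  ext x
  simp only [Finset.mem_insert, Finset.mem_map, Finset.mem_preimage, Fin.coe_succEmb]
  constructor
  · rintro (rfl | ⟨y, hy, rfl⟩)
    · exact h0
    · exact hy
  · intro hx
    cases x using Fin.cases with
    | zero => exact Or.inl rfl
    | succ y => exact Or.inr ⟨y, hx, rfl⟩

lemma preimage_insert_map {n : ℕ} (J : Finset (Fin n)) :
    (insert (0 : Fin (n+1)) (J.map (Fin.succEmb n))).preimage Fin.succ
      (Set.injOn_of_injective (Fin.succ_injective n)) = J := by
  ext x
  simp [Finset.mem_preimage, Fin.coe_succEmb, (Fin.succ_injective n).eq_iff,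
    (Fin.succ_ne_zero x)]

lemma sum_split {n : ℕ} (f : Finset (Fin (n+1)) → ℤ) :
    ∑ J : Finset (Fin (n+1)), f J
      = ∑ J : Finset (Fin n),
          (f (insert 0 (J.map (Fin.succEmb n))) + f (J.map (Fin.succEmb n))) := by
  rw [← Finset.sum_filter_add_sum_filter_not Finset.univ
        (fun J => (0 : Fin (n+1)) ∈ J) f, Finset.sum_add_distrib]
  congr 1
  · refine Finset.sum_nbij' (i := fun K => K.preimage Fin.succ
      (Set.injOn_of_injective (Fin.succ_injective n)))
      (j := fun J => insert 0 (J.map (Fin.succEmb n))) ?_ ?_ ?_ ?_ ?_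
    · intro K hK; exact Finset.mem_univ _
    · intro J hJ; simp
    · intro K hK
      simp only [Finset.mem_filter] at hK
      exact insert_map_preimage K hK.2
    · intro J hJ; exact preimage_insert_map J
    · intro K hK
      simp only [Finset.mem_filter] at hK
      rw [insert_map_preimage K hK.2]
  · refine Finset.sum_nbij' (i := fun K => K.preimage Fin.succ
      (Set.injOn_of_injective (Fin.succ_injective n)))
      (j := fun J => J.map (Fin.succEmb n)) ?_ ?_ ?_ ?_ ?_
    · intro K hK; exact Finset.mem_univ _
    · intro J hJ; simp [zero_not_mem_map J]
    · intro K hK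
      simp only [Finset.mem_filter] at hK
      exact map_preimage K hK.2
    · intro J hJ; exact preimage_map J
    · intro K hK
      simp only [Finset.mem_filter] at hK
      rw [map_preimage K hK.2]


/-- abbreviations for the four sums -/
def SA {n : ℕ} (p : Finset (Fin n) → Prop) [DecidablePred p] (w : Fin n → ℤ) (k : ℤ) : ℤ :=
  ∑ J ∈ Finset.univ.filter p, chi ((n : ℤ) - J.card + k) * fibz (J.card : ℤ) * ∏ j ∈ J, w j
def SB {n : ℕ} (p : Finset (Fin n) → Prop) [DecidablePred p] (w : Fin n → ℤ) (k : ℤ) : ℤ :=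
  ∑ J ∈ Finset.univ.filter p, chi ((n : ℤ) - J.card + k) * fibz ((J.card : ℤ) - 1) * ∏ j ∈ J, w j

lemma card_insert_map {n : ℕ} (J : Finset (Fin n)) :
    (insert (0 : Fin (n+1)) (J.map (Fin.succEmb n))).card = J.card + 1 := by
  rw [Finset.card_insert_of_notMem (zero_not_mem_map J), Finset.card_map]

lemma prod_insert_map {n : ℕ} (J : Finset (Fin n)) (w : Fin (n+1) → ℤ) :
    ∏ j ∈ insert (0 : Fin (n+1)) (J.map (Fin.succEmb n)), w j
      = w 0 * ∏ j ∈ J, w (Fin.succ j) := by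
  rw [Finset.prod_insert (zero_not_mem_map J), Finset.prod_map]
  rfl

lemma prod_map' {n : ℕ} (J : Finset (Fin n)) (w : Fin (n+1) → ℤ) :
    ∏ j ∈ J.map (Fin.succEmb n), w j = ∏ j ∈ J, w (Fin.succ j) := by
  rw [Finset.prod_map]; rfl


section keys
variable {n : ℕ} (w : Fin (n+1) → ℤ) (k : ℤ) (J : Finset (Fin n))

lemma cast_arith1 : ((n+1 : ℕ) : ℤ) - ((#J + 1 : ℕ) : ℤ) + k = (n : ℤ) - (#J : ℤ) + k := by
  push_cast; ring
lemma cast_arith2 : ((n+1 : ℕ) : ℤ) - ((#J : ℕ) : ℤ) + k = (n : ℤ) - (#J : ℤ) + (k + 1) := by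
  push_cast; ring
lemma fib_arith1 : fibz ((#J + 1 : ℕ) : ℤ) = fibz (#J : ℤ) + fibz ((#J : ℤ) - 1) := by
  push_cast; exact fibz_succ _
lemma fib_arith2 : fibz (((#J + 1 : ℕ) : ℤ) - 1) = fibz (#J : ℤ) := by
  norm_num

lemma keyA :
    (if ll1 (insert (0:Fin (n+1)) (J.map (Fin.succEmb n))) then
        chi (((n+1 : ℕ) : ℤ) - (#(insert (0:Fin (n+1)) (J.map (Fin.succEmb n))) : ℤ) + k)
          * fibz (#(insert (0:Fin (n+1)) (J.map (Fin.succEmb n))) : ℤ)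
          * ∏ j ∈ insert (0:Fin (n+1)) (J.map (Fin.succEmb n)), w j else 0)
      + (if ll1 (J.map (Fin.succEmb n)) then
        chi (((n+1 : ℕ) : ℤ) - (#(J.map (Fin.succEmb n)) : ℤ) + k)
          * fibz (#(J.map (Fin.succEmb n)) : ℤ) * ∏ j ∈ J.map (Fin.succEmb n), w j else 0)
    = (w 0 * (if ll1 J then chi ((n : ℤ) - (#J : ℤ) + k) * fibz (#J : ℤ) * ∏ j ∈ J, w (Fin.succ j) else 0)
        + w 0 * (if ll1 J then chi ((n : ℤ) - (#J : ℤ) + k) * fibz ((#J : ℤ) - 1) * ∏ j ∈ J, w (Fin.succ j) else 0))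
      + (if ll3 J then chi ((n : ℤ) - (#J : ℤ) + (k+1)) * fibz (#J : ℤ) * ∏ j ∈ J, w (Fin.succ j) else 0) := by
  rw [card_insert_map, prod_insert_map, prod_map', Finset.card_map,
    cast_arith1, cast_arith2, fib_arith1]
  simp only [ll1_insert, ll1_map]
  split_ifs <;> ring

lemma keyB :
    (if ll1 (insert (0:Fin (n+1)) (J.map (Fin.succEmb n))) then
        chi (((n+1 : ℕ) : ℤ) - (#(insert (0:Fin (n+1)) (J.map (Fin.succEmb n))) : ℤ) + k)
          * fibz ((#(insert (0:Fin (n+1)) (J.map (Fin.succEmb n))) : ℤ) - 1)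
          * ∏ j ∈ insert (0:Fin (n+1)) (J.map (Fin.succEmb n)), w j else 0)
      + (if ll1 (J.map (Fin.succEmb n)) then
        chi (((n+1 : ℕ) : ℤ) - (#(J.map (Fin.succEmb n)) : ℤ) + k)
          * fibz ((#(J.map (Fin.succEmb n)) : ℤ) - 1) * ∏ j ∈ J.map (Fin.succEmb n), w j else 0)
    = w 0 * (if ll1 J then chi ((n : ℤ) - (#J : ℤ) + k) * fibz (#J : ℤ) * ∏ j ∈ J, w (Fin.succ j) else 0)
      + (if ll3 J then chi ((n : ℤ) - (#J : ℤ) + (k+1)) * fibz ((#J : ℤ) - 1) * ∏ j ∈ J, w (Fin.succ j) else 0) := by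
  rw [card_insert_map, prod_insert_map, prod_map', Finset.card_map,
    cast_arith1, cast_arith2, fib_arith2]
  simp only [ll1_insert, ll1_map]
  split_ifs <;> ring

lemma keyC :
    (if ll3 (insert (0:Fin (n+1)) (J.map (Fin.succEmb n))) then
        chi (((n+1 : ℕ) : ℤ) - (#(insert (0:Fin (n+1)) (J.map (Fin.succEmb n))) : ℤ) + k)
          * fibz (#(insert (0:Fin (n+1)) (J.map (Fin.succEmb n))) : ℤ)
          * ∏ j ∈ insert (0:Fin (n+1)) (J.map (Fin.succEmb n)), w j else 0)
      + (if ll3 (J.map (Fin.succEmb n)) then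
        chi (((n+1 : ℕ) : ℤ) - (#(J.map (Fin.succEmb n)) : ℤ) + k)
          * fibz (#(J.map (Fin.succEmb n)) : ℤ) * ∏ j ∈ J.map (Fin.succEmb n), w j else 0)
    = (if ll1 J then chi ((n : ℤ) - (#J : ℤ) + (k+1)) * fibz (#J : ℤ) * ∏ j ∈ J, w (Fin.succ j) else 0) := by
  rw [if_neg (ll3_insert J), prod_map', Finset.card_map, cast_arith2]
  simp only [ll3_map]
  ring

lemma keyD :
    (if ll3 (insert (0:Fin (n+1)) (J.map (Fin.succEmb n))) then
        chi (((n+1 : ℕ) : ℤ) - (#(insert (0:Fin (n+1)) (J.map (Fin.succEmb n))) : ℤ) + k)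
          * fibz ((#(insert (0:Fin (n+1)) (J.map (Fin.succEmb n))) : ℤ) - 1)
          * ∏ j ∈ insert (0:Fin (n+1)) (J.map (Fin.succEmb n)), w j else 0)
      + (if ll3 (J.map (Fin.succEmb n)) then
        chi (((n+1 : ℕ) : ℤ) - (#(J.map (Fin.succEmb n)) : ℤ) + k)
          * fibz ((#(J.map (Fin.succEmb n)) : ℤ) - 1) * ∏ j ∈ J.map (Fin.succEmb n), w j else 0)
    = (if ll1 J then chi ((n : ℤ) - (#J : ℤ) + (k+1)) * fibz ((#J : ℤ) - 1) * ∏ j ∈ J, w (Fin.succ j) else 0) := by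
  rw [if_neg (ll3_insert J), prod_map', Finset.card_map, cast_arith2]
  simp only [ll3_map]
  ring

end keys

lemma comb : ∀ (n : ℕ) (w : Fin n → ℤ) (k : ℤ),
    ee (List.ofFn w) k =
      ((SA ll1 w k, SB ll1 w k), (SA ll3 w k, SB ll3 w k)) := by
  intro n
  induction n with
  | zero =>
    intro w k
    have huniv : (Finset.univ : Finset (Finset (Fin 0))) = {∅} := by decide
    have h1 : ll1 (∅ : Finset (Fin 0)) := by intro i hi; simp at hi
    have h3 : ll3 (∅ : Finset (Fin 0)) := by intro i hi; simp at hi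
    have hf0 : fibz ((0:ℕ) : ℤ) = 0 := by norm_num [fibz]
    have hf1 : fibz (((0:ℕ) : ℤ) - 1) = 1 := by norm_num [fibz]
    simp only [List.ofFn_zero, ee, SA, SB, huniv, Finset.filter_singleton, if_pos h1, if_pos h3,
      Finset.sum_singleton, Finset.card_empty, Finset.prod_empty, hf0, hf1]
    norm_num
  | succ n ih =>
    intro w k
    rw [List.ofFn_succ]
    simp only [ee]
    rw [ih (fun i => w i.succ) k, ih (fun i => w i.succ) (k+1)]
    symm
    refine Prod.ext (Prod.ext ?_ ?_) (Prod.ext ?_ ?_) <;> dsimp only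
    · show SA ll1 w k = w 0 * (SA ll1 (fun i => w i.succ) k + SB ll1 (fun i => w i.succ) k)
        + SA ll3 (fun i => w i.succ) (k + 1)
      unfold SA SB
      rw [Finset.sum_filter, Finset.sum_filter, Finset.sum_filter, Finset.sum_filter, sum_split,
        mul_add, Finset.mul_sum, Finset.mul_sum, ← Finset.sum_add_distrib, ← Finset.sum_add_distrib]
      exact Finset.sum_congr rfl (fun J _ => keyA w k J)
    · show SB ll1 w k = w 0 * SA ll1 (fun i => w i.succ) k + SB ll3 (fun i => w i.succ) (k + 1)
      unfold SA SB
      rw [Finset.sum_filter, Finset.sum_filter, Finset.sum_filter, sum_split,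
        Finset.mul_sum, ← Finset.sum_add_distrib]
      exact Finset.sum_congr rfl (fun J _ => keyB w k J)
    · show SA ll3 w k = SA ll1 (fun i => w i.succ) (k + 1)
      unfold SA
      rw [Finset.sum_filter, Finset.sum_filter, sum_split]
      exact Finset.sum_congr rfl (fun J _ => keyC w k J)
    · show SB ll3 w k = SB ll1 (fun i => w i.succ) (k + 1)
      unfold SB
      rw [Finset.sum_filter, Finset.sum_filter, sum_split]
      exact Finset.sum_congr rfl (fun J _ => keyD w k J)

end helper

/-- The (1,1) entry of `M Φ w` equals `A·Φ + B` with
`A = Σ_{s ≪₁ w} χ(n - |s|) F_{|s|} m_s` and `B = Σ_{s ≪₁ w} χ(n - |s|) F_{|s|-1} m_s`. -/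
theorem stmt6 (Φ : ℝ) (hΦ : Φ ^ 2 = Φ + 1) (n : ℕ) (hn : 0 < n) (w : Fin n → ℤ) :
    M Φ (List.ofFn w) 0 0 =
      ((∑ J ∈ Finset.univ.filter (fun J : Finset (Fin n) => ll1 J),
          chi ((n : ℤ) - J.card) * fibz (J.card : ℤ) * ∏ j ∈ J, w j : ℤ) : ℝ) * Φ +
      ((∑ J ∈ Finset.univ.filter (fun J : Finset (Fin n) => ll1 J),
          chi ((n : ℤ) - J.card) * fibz ((J.card : ℤ) - 1) * ∏ j ∈ J, w j : ℤ) : ℝ) := by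
  obtain ⟨m, rfl⟩ := Nat.exists_eq_succ_of_ne_zero hn.ne'
  rw [List.ofFn_succ]
  simp only [M]
  rw [Tpow, Nmat Φ hΦ, Matrix.mul_fin_two]
  have key : e1 Φ 0 (List.ofFn w) =
      ((∑ J ∈ Finset.univ.filter (fun J : Finset (Fin (m+1)) => ll1 J),
          chi (((m+1 : ℕ) : ℤ) - J.card) * fibz (J.card : ℤ) * ∏ j ∈ J, w j : ℤ) : ℝ) * Φ +
      ((∑ J ∈ Finset.univ.filter (fun J : Finset (Fin (m+1)) => ll1 J),
          chi (((m+1 : ℕ) : ℤ) - J.card) * fibz ((J.card : ℤ) - 1) * ∏ j ∈ J, w j : ℤ) : ℝ) := by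
    unfold e1
    rw [comb (m+1) w 0]
    have hSA : SA ll1 w 0 = ∑ J ∈ Finset.univ.filter (fun J : Finset (Fin (m+1)) => ll1 J),
        chi (((m+1 : ℕ) : ℤ) - J.card) * fibz (J.card : ℤ) * ∏ j ∈ J, w j := by
      unfold SA; simp only [add_zero]
    have hSB : SB ll1 w 0 = ∑ J ∈ Finset.univ.filter (fun J : Finset (Fin (m+1)) => ll1 J),
        chi (((m+1 : ℕ) : ℤ) - J.card) * fibz ((J.card : ℤ) - 1) * ∏ j ∈ J, w j := by
      unfold SB; simp only [add_zero]
    rw [hSA, hSB]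
  rw [← key]
  rw [List.ofFn_succ, e1_cons Φ hΦ]
  show _ = _
  norm_num [e3_cons]
  ring
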